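/- Let â^{(1)}, …, â^{(f)} be symmetrized multiplication operators of orders r₁, …, r_f with associated non-symmetrized operators â^{(1)}_ns, …, â^{(f)}_ns (as defined in the context). Then for every p ∈ ℕ and every x ∈ 𝓕_p that is invariant under all permutations of its arguments, the fully symmetrized composition equals the symmetrization of the non-symmetrized composition: â^{(f)}(â^{(f−1)}(⋯ â^{(1)} x ⋯)) = P_sym(â^{(f)}_ns(â^{(f−1)}_ns(⋯ â^{(1)}_ns x ⋯))). -/

import Mathlib

/-- Full symmetrization on the `p`-particle space `𝓕_p = ((Fin p → α) → V)`:
`(P_sym x)(k) = (1/p!) ∑_{ρ ∈ Perm(Fin p)} x (k ∘ ρ)`. -/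
noncomputable def Psym {α V : Type*} [AddCommGroup V] [Module ℚ V] (p : ℕ)
    (x : (Fin p → α) → V) : (Fin p → α) → V :=
  fun k => ((p.factorial : ℚ)⁻¹) • ∑ ρ : Equiv.Perm (Fin p), x (k ∘ ρ)

/-- The non-symmetrized multiplication operator of order `r` associated to a family
`A = (A_m)_m` of `End(V)`-valued functions:
`(â_ns x)(k₁,…,k_{p+r}) = A_{p+r}(k₁,…,k_{p+r}) (x (k₁,…,k_p))`. -/
def nsOp {α V : Type*} [AddCommGroup V] [Module ℚ V] (r : ℕ)
    (A : ∀ m : ℕ, (Fin m → α) → Module.End ℚ V) (p : ℕ)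
    (x : (Fin p → α) → V) : (Fin (p + r) → α) → V :=
  fun k => A (p + r) k (x fun i : Fin p => k (Fin.castAdd r i))

/-- The particle number reached after applying a list of operators of given orders,
starting from `p`. -/
def totalIdx {α V : Type*} [AddCommGroup V] [Module ℚ V] (p : ℕ)
    (ops : List (ℕ × (∀ m : ℕ, (Fin m → α) → Module.End ℚ V))) : ℕ :=
  ops.foldl (fun q op => q + op.1) p

/-- The composition `â^{(f)}_ns (⋯ (â^{(1)}_ns x) ⋯)` of the non-symmetrized operators
associated to a list of (order, family) pairs, applied from the head of the list on. -/
def compNs {α V : Type*} [AddCommGroup V] [Module ℚ V] :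
    (p : ℕ) → (ops : List (ℕ × (∀ m : ℕ, (Fin m → α) → Module.End ℚ V))) →
      ((Fin p → α) → V) → ((Fin (totalIdx p ops) → α) → V)
  | _, [], x => x
  | p, op :: rest, x => compNs (p + op.1) rest (nsOp op.1 op.2 p x)

/-- The composition `â^{(f)} (⋯ (â^{(1)} x) ⋯)` of the symmetrized operators
`â = P_sym ∘ â_ns` associated to a list of (order, family) pairs, applied from the head of
the list on. -/
noncomputable def compSym {α V : Type*} [AddCommGroup V] [Module ℚ V] :
    (p : ℕ) → (ops : List (ℕ × (∀ m : ℕ, (Fin m → α) → Module.End ℚ V))) →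
      ((Fin p → α) → V) → ((Fin (totalIdx p ops) → α) → V)
  | _, [], x => x
  | p, op :: rest, x => compSym (p + op.1) rest (Psym (p + op.1) (nsOp op.1 op.2 p x))

section Aux
variable {α V : Type*} [AddCommGroup V] [Module ℚ V]

lemma psym_comp_perm (p : ℕ) (y : (Fin p → α) → V) (ρ : Equiv.Perm (Fin p))
    (k : Fin p → α) : Psym p y (k ∘ ρ) = Psym p y k := by
  unfold Psym
  congr 1
  refine Fintype.sum_equiv (Equiv.mulLeft ρ) _ _ (fun σ => ?_)
  have h1 : (k ∘ ⇑ρ) ∘ ⇑σ = k ∘ ⇑(Equiv.mulLeft ρ σ) := by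
    funext i; simp [Function.comp, Equiv.Perm.mul_apply]
  rw [h1]

lemma psym_of_invariant (p : ℕ) (y : (Fin p → α) → V)
    (hy : ∀ ρ : Equiv.Perm (Fin p), ∀ k, y (k ∘ ρ) = y k) : Psym p y = y := by
  funext k
  unfold Psym
  rw [Finset.sum_congr rfl (fun ρ _ => hy ρ k), Finset.sum_const, Finset.card_univ,
    Fintype.card_perm, Fintype.card_fin, ← Nat.cast_smul_eq_nsmul ℚ, smul_smul,
    inv_mul_cancel₀ (Nat.cast_ne_zero.mpr p.factorial_ne_zero), one_smul]

lemma psym_idem (p : ℕ) (y : (Fin p → α) → V) : Psym p (Psym p y) = Psym p y :=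
  psym_of_invariant p (Psym p y) (psym_comp_perm p y)

/-- embed a permutation of the first `p` slots into `Fin (p+r)` -/
noncomputable def hatPerm (p r : ℕ) (σ : Equiv.Perm (Fin p)) : Equiv.Perm (Fin (p + r)) :=
  finSumFinEquiv.permCongr (σ.sumCongr (Equiv.refl (Fin r)))

lemma hatPerm_castAdd (p r : ℕ) (σ : Equiv.Perm (Fin p)) (i : Fin p) :
    hatPerm p r σ (Fin.castAdd r i) = Fin.castAdd r (σ i) := by
  simp [hatPerm]

lemma hatPerm_fix (p r : ℕ) (σ : Equiv.Perm (Fin p)) (l : Fin (p + r)) (hl : p ≤ (l : ℕ)) :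
    hatPerm p r σ l = l := by
  obtain ⟨j, rfl⟩ : ∃ j : Fin r, l = Fin.natAdd p j :=
    ⟨⟨(l : ℕ) - p, by omega⟩, by ext; simp; omega⟩
  simp [hatPerm]

lemma psym_nsOp_psym (r p : ℕ) (A : ∀ m : ℕ, (Fin m → α) → Module.End ℚ V)
    (hA : ∀ π : Equiv.Perm (Fin (p + r)), (∀ l : Fin (p + r), p ≤ (l : ℕ) → π l = l) →
      ∀ k : Fin (p + r) → α, A (p + r) (k ∘ π) = A (p + r) k)
    (z : (Fin p → α) → V) :
    Psym (p + r) (nsOp r A p (Psym p z)) = Psym (p + r) (nsOp r A p z) := by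
  funext k
  unfold Psym nsOp
  congr 1
  have hσ : ∀ σ : Equiv.Perm (Fin p),
      (∑ ρ : Equiv.Perm (Fin (p + r)), A (p + r) (k ∘ ρ)
        (z ((fun i : Fin p => (k ∘ ρ) (Fin.castAdd r i)) ∘ σ)))
      = ∑ ρ : Equiv.Perm (Fin (p + r)), A (p + r) (k ∘ ρ)
        (z fun i : Fin p => (k ∘ ρ) (Fin.castAdd r i)) := by
    intro σ
    refine Fintype.sum_equiv (Equiv.mulRight (hatPerm p r σ)) _ _ (fun ρ => ?_)
    simp only [Equiv.coe_mulRight]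
    have h1 : (k ∘ ⇑(ρ * hatPerm p r σ)) = (k ∘ ⇑ρ) ∘ ⇑(hatPerm p r σ) := by
      ext i; simp [Function.comp, Equiv.Perm.mul_apply]
    rw [h1, hA (hatPerm p r σ) (hatPerm_fix p r σ)]
    have h2 : ((fun i : Fin p => (k ∘ ⇑ρ) (Fin.castAdd r i)) ∘ ⇑σ)
        = fun i : Fin p => (k ∘ ⇑(ρ * hatPerm p r σ)) (Fin.castAdd r i) := by
      funext i; simp [Function.comp, Equiv.Perm.mul_apply, hatPerm_castAdd]
    rw [h2, ← h1]
  simp_rw [map_smul, map_sum]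
  rw [← Finset.smul_sum, Finset.sum_comm]
  rw [Finset.sum_congr rfl (fun σ _ => hσ σ), Finset.sum_const, Finset.card_univ,
    Fintype.card_perm, Fintype.card_fin, ← Nat.cast_smul_eq_nsmul ℚ, smul_smul,
    inv_mul_cancel₀ (Nat.cast_ne_zero.mpr p.factorial_ne_zero), one_smul]

lemma compNs_psym_congr :
    ∀ (ops : List (ℕ × (∀ m : ℕ, (Fin m → α) → Module.End ℚ V))),
      (∀ o ∈ ops, ∀ q : ℕ, ∀ π : Equiv.Perm (Fin (q + o.1)),
        (∀ l : Fin (q + o.1), q ≤ (l : ℕ) → π l = l) →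
        ∀ k, o.2 (q + o.1) (k ∘ π) = o.2 (q + o.1) k) →
      ∀ (q : ℕ) (y y' : (Fin q → α) → V), Psym q y = Psym q y' →
      Psym (totalIdx q ops) (compNs q ops y) = Psym (totalIdx q ops) (compNs q ops y')
  | [], _, q, y, y', h => h
  | op :: rest, hops, q, y, y', h => by
      have hA := hops op List.mem_cons_self q
      have hkey : Psym (q + op.1) (nsOp op.1 op.2 q y)
          = Psym (q + op.1) (nsOp op.1 op.2 q y') := by
        calc Psym (q + op.1) (nsOp op.1 op.2 q y)
            = Psym (q + op.1) (nsOp op.1 op.2 q (Psym q y)) :=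
              (psym_nsOp_psym _ _ _ hA y).symm
          _ = Psym (q + op.1) (nsOp op.1 op.2 q (Psym q y')) := by rw [h]
          _ = Psym (q + op.1) (nsOp op.1 op.2 q y') := psym_nsOp_psym _ _ _ hA y'
      exact compNs_psym_congr rest (fun o ho => hops o (List.mem_cons_of_mem _ ho))
        (q + op.1) _ _ hkey

lemma compSym_aux :
    ∀ (ops : List (ℕ × (∀ m : ℕ, (Fin m → α) → Module.End ℚ V))),
      (∀ o ∈ ops, ∀ q : ℕ, ∀ π : Equiv.Perm (Fin (q + o.1)),
        (∀ l : Fin (q + o.1), q ≤ (l : ℕ) → π l = l) →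
        ∀ k, o.2 (q + o.1) (k ∘ π) = o.2 (q + o.1) k) →
      ∀ (p : ℕ) (x : (Fin p → α) → V),
      (∀ ρ : Equiv.Perm (Fin p), ∀ k : Fin p → α, x (k ∘ ρ) = x k) →
      compSym p ops x = Psym (totalIdx p ops) (compNs p ops x)
  | [], _, p, x, hx => (psym_of_invariant p x hx).symm
  | op :: rest, hops, p, x, hx => by
      show compSym (p + op.1) rest (Psym (p + op.1) (nsOp op.1 op.2 p x))
        = Psym (totalIdx (p + op.1) rest) (compNs (p + op.1) rest (nsOp op.1 op.2 p x))
      rw [compSym_aux rest (fun o ho => hops o (List.mem_cons_of_mem _ ho)) (p + op.1)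
        (Psym (p + op.1) (nsOp op.1 op.2 p x)) (psym_comp_perm _ _)]
      exact compNs_psym_congr rest (fun o ho => hops o (List.mem_cons_of_mem _ ho))
        (p + op.1) _ _ (psym_idem _ _)

end Aux

/-- Let `â^{(1)}, …, â^{(f)}` be symmetrized multiplication operators whose associated
families `A_m` (for `m` at least the order) are invariant under permutations of the first
`m - r` arguments among themselves and of the last `r` arguments among themselves.  Then
for every permutation-invariant `x ∈ 𝓕_p`, the fully symmetrized composition equals the
symmetrization of the non-symmetrized composition:
`â^{(f)}(â^{(f-1)}(⋯ â^{(1)} x ⋯)) = P_sym (â^{(f)}_ns (â^{(f-1)}_ns (⋯ â^{(1)}_ns x ⋯)))`. -/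
theorem compSym_eq_psym_compNs {α V : Type*} [AddCommGroup V] [Module ℚ V]
    (ops : List (ℕ × (∀ m : ℕ, (Fin m → α) → Module.End ℚ V)))
    (hops : ∀ op ∈ ops, ∀ m : ℕ, op.1 ≤ m →
      (∀ π : Equiv.Perm (Fin m), (∀ l : Fin m, m - op.1 ≤ (l : ℕ) → π l = l) →
        ∀ k : Fin m → α, op.2 m (k ∘ π) = op.2 m k) ∧
      (∀ π : Equiv.Perm (Fin m), (∀ l : Fin m, (l : ℕ) < m - op.1 → π l = l) →
        ∀ k : Fin m → α, op.2 m (k ∘ π) = op.2 m k))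
    (p : ℕ) (x : (Fin p → α) → V)
    (hx : ∀ ρ : Equiv.Perm (Fin p), ∀ k : Fin p → α, x (k ∘ ρ) = x k) :
    compSym p ops x = Psym (totalIdx p ops) (compNs p ops x) := by
  refine compSym_aux ops ?_ p x hx
  intro o ho q π hπ k
  exact (hops o ho (q + o.1) (Nat.le_add_left _ _)).1 π (fun l hl => hπ l (by omega)) k
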